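/- Raabe's Alternating Series Test: if (a_n) is a sequence of positive real numbers such that lim_{n→∞} n(a_n/a_{n+1} − 1) exists and equals p with 0 < p ≤ 1, then the alternating series ∑_{n=1}^∞ (−1)^{n−1} a_n converges. -/

import Mathlib

open Filter

/-- Raabe's Alternating Series Test: if `(aₙ)` is a sequence of positive reals with
Raabe limit `p`, `0 < p ≤ 1`, then `∑_{n=1}^∞ (-1)^{n-1} aₙ` converges. -/
theorem raabe_alternating_series_test (a : ℕ → ℝ) (ha : ∀ n, 0 < a n) (p : ℝ)
    (hp : Tendsto (fun n : ℕ => (n : ℝ) * (a n / a (n + 1) - 1)) atTop (nhds p))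
    (hp0 : 0 < p) (hp1 : p ≤ 1) :
    ∃ l : ℝ, Tendsto (fun N => ∑ n ∈ Finset.range N, (-1 : ℝ) ^ n * a (n + 1))
      atTop (nhds l) := by
  -- get a threshold beyond which `n * (a n / a (n+1) - 1) > p/2`
  have hev : ∀ᶠ n : ℕ in atTop, p / 2 < (n : ℝ) * (a n / a (n + 1) - 1) :=
    hp.eventually_const_lt (by linarith)
  obtain ⟨N0, hN0⟩ := eventually_atTop.1 hev
  set N := max N0 1 with hNdef
  have hN1 : 1 ≤ N := le_max_right _ _
  -- key inequality for n ≥ N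
  have key : ∀ n, N ≤ n → p / 2 * a (n + 1) ≤ (n : ℝ) * (a n - a (n + 1)) := by
    intro n hn
    have hn0 : N0 ≤ n := le_trans (le_max_left _ _) hn
    have h := hN0 n hn0
    have hne : a (n + 1) ≠ 0 := (ha (n + 1)).ne'
    have h2 : p / 2 * a (n + 1) ≤ (n : ℝ) * (a n / a (n + 1) - 1) * a (n + 1) := by
      have := (ha (n + 1)).le
      nlinarith
    calc p / 2 * a (n + 1) ≤ (n : ℝ) * (a n / a (n + 1) - 1) * a (n + 1) := h2
      _ = (n : ℝ) * (a n - a (n + 1)) := by field_simp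
  -- antitone beyond N
  have anti : ∀ n, N ≤ n → a (n + 1) ≤ a n := by
    intro n hn
    have hnpos : (0 : ℝ) < n := by
      exact_mod_cast lt_of_lt_of_le (Nat.lt_of_lt_of_le Nat.zero_lt_one hN1) hn
    have h := key n hn
    nlinarith [ha (n + 1)]
  -- the sequence `a` tends to 0
  have ha0 : Tendsto a atTop (nhds 0) := by
    rw [← tendsto_add_atTop_iff_nat N]
    set b : ℕ → ℝ := fun n => a (n + N) with hb
    have hanti : Antitone b := antitone_nat_of_succ_le fun n => by
      have := anti (n + N) (Nat.le_add_left _ _)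
      simpa [hb, add_right_comm] using this
    have hbdd : BddBelow (Set.range b) := ⟨0, by rintro x ⟨n, rfl⟩; exact (ha _).le⟩
    have hL : Tendsto b atTop (nhds (⨅ n, b n)) := tendsto_atTop_ciInf hanti hbdd
    set L := ⨅ n, b n with hLdef
    have hL0 : 0 ≤ L := le_ciInf fun n => (ha _).le
    rcases eq_or_lt_of_le hL0 with h0 | hLpos
    · rwa [← h0] at hL
    -- derive a contradiction from L > 0
    exfalso
    have hsum : Summable (fun n => b n - b (n + 1)) := by
      apply summable_of_sum_range_le (c := b 0)
      · intro n
        have := anti (n + N) (Nat.le_add_left _ _)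
        simp only [hb]
        rw [sub_nonneg]
        simpa [add_right_comm] using this
      · intro n
        rw [Finset.sum_range_sub' b n]
        have : L ≤ b n := ciInf_le hbdd n
        linarith
    have hcomp : Summable (fun n : ℕ => p / 2 * L / (n + N + 1 : ℕ)) := by
      apply hsum.of_nonneg_of_le
      · intro n
        positivity
      · intro n
        have hle : p / 2 * a (n + N + 1) ≤ ((n + N : ℕ) : ℝ) * (a (n + N) - a (n + N + 1)) :=
          key (n + N) (Nat.le_add_left _ _)
        have hLle : L ≤ b (n + 1) := ciInf_le hbdd (n + 1)
        have hbn1 : b (n + 1) = a (n + N + 1) := by simp [hb, add_right_comm]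
        have hnpos : (0 : ℝ) < ((n + N + 1 : ℕ) : ℝ) := by positivity
        rw [div_le_iff₀ hnpos, mul_comm (p / 2) L]
        have hdiff : 0 ≤ b n - b (n + 1) := by
          have := anti (n + N) (Nat.le_add_left _ _)
          simp only [hb]; rw [sub_nonneg]; simpa [add_right_comm] using this
        have hcast : ((n + N : ℕ) : ℝ) ≤ ((n + N + 1 : ℕ) : ℝ) := by exact_mod_cast Nat.le_succ _
        have hbsub : b n - b (n + 1) = a (n + N) - a (n + N + 1) := by
          simp [hb, add_right_comm]
        rw [hbsub]
        calc L * (p / 2) = p / 2 * L := mul_comm _ _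
          _ ≤ p / 2 * a (n + N + 1) := by
              rw [hbn1] at hLle; nlinarith
          _ ≤ ((n + N : ℕ) : ℝ) * (a (n + N) - a (n + N + 1)) := hle
          _ ≤ ((n + N + 1 : ℕ) : ℝ) * (a (n + N) - a (n + N + 1)) := by
              rw [hbsub] at hdiff
              exact mul_le_mul_of_nonneg_right hcast hdiff
          _ = (a (n + N) - a (n + N + 1)) * ((n + N + 1 : ℕ) : ℝ) := mul_comm _ _
    -- but this comparison series diverges
    have hdiv : ¬ Summable (fun n : ℕ => p / 2 * L / (n + N + 1 : ℕ)) := by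
      intro hs
      have h1 : Summable (fun n : ℕ => (1 : ℝ) / (n + N + 1 : ℕ)) := by
        have hc : p / 2 * L ≠ 0 := by positivity
        have := hs.div_const (p / 2 * L)
        convert this using 2 with n
        · rfl
        field_simp
      have h2 : Summable (fun n : ℕ => (1 : ℝ) / (n : ℕ)) := by
        rw [← summable_nat_add_iff (N + 1)]
        convert h1 using 2 with n
        all_goals rfl
      exact Real.not_summable_one_div_natCast h2
    exact hdiv hcomp
  -- now apply the alternating series test to the shifted sequence
  set c : ℕ → ℝ := fun n => a (n + N + 1) with hc
  have hanti2 : Antitone c := antitone_nat_of_succ_le fun n => by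
    have := anti (n + N + 1) (le_trans (Nat.le_add_left _ _) (Nat.le_succ _))
    simpa [hc, show n + 1 + N + 1 = n + N + 1 + 1 from by omega] using this
  have hb0 : Tendsto c atTop (nhds 0) :=
    ha0.comp (tendsto_add_atTop_nat (N + 1))
  obtain ⟨l, hl⟩ := hanti2.tendsto_alternating_series_of_tendsto_zero hb0
  -- relate partial sums
  set C := ∑ n ∈ Finset.range N, (-1 : ℝ) ^ n * a (n + 1) with hC
  refine ⟨C + (-1 : ℝ) ^ N * l, ?_⟩
  have hg : Tendsto (fun M : ℕ => C + (-1 : ℝ) ^ N *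
      ∑ n ∈ Finset.range (M - N), (-1 : ℝ) ^ n * c n) atTop
      (nhds (C + (-1 : ℝ) ^ N * l)) :=
    tendsto_const_nhds.add ((hl.comp (tendsto_sub_atTop_nat N)).const_mul _)
  refine hg.congr' ?_
  filter_upwards [eventually_ge_atTop N] with M hM
  obtain ⟨j, rfl⟩ := Nat.exists_eq_add_of_le hM
  rw [Nat.add_sub_cancel_left, Finset.sum_range_add]
  congr 1
  rw [Finset.mul_sum]
  refine Finset.sum_congr rfl fun n _ => ?_
  simp only [hc]
  rw [pow_add]
  ring_nf
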